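/- Let C be an absolutely continuous copula whose partial derivative ∂₂C exists for all u ∈ (0,1), v ∈ (0,1). Then the following are equivalent: (i) C(u,v) + C(u,1-v) = u for all u,v ∈ [0,1]; (ii) ∂₂C(u,v) = ∂₂C(u,1-v) for all u ∈ (0,1) and v ∈ (0,1/2). -/

import Mathlib

open MeasureTheory Set

/-- A (bivariate) copula: grounded, with uniform marginals, and 2-increasing. -/
structure IsCopula (C : ℝ → ℝ → ℝ) : Prop where
  grounded_fst : ∀ v ∈ Icc (0:ℝ) 1, C 0 v = 0
  grounded_snd : ∀ u ∈ Icc (0:ℝ) 1, C u 0 = 0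
  margin_fst : ∀ u ∈ Icc (0:ℝ) 1, C u 1 = u
  margin_snd : ∀ v ∈ Icc (0:ℝ) 1, C 1 v = v
  twoIncreasing : ∀ u₁ u₂ v₁ v₂ : ℝ, u₁ ∈ Icc (0:ℝ) 1 → u₂ ∈ Icc (0:ℝ) 1 →
    v₁ ∈ Icc (0:ℝ) 1 → v₂ ∈ Icc (0:ℝ) 1 → u₁ ≤ u₂ → v₁ ≤ v₂ →
    C u₁ v₂ + C u₂ v₁ ≤ C u₁ v₁ + C u₂ v₂

/-- For an absolutely continuous copula `C` with partial derivative `∂₂C = D` on the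
open unit square, `C(u,v) + C(u,1-v) = u` on `[0,1]²` iff
`∂₂C(u,v) = ∂₂C(u,1-v)` for all `u ∈ (0,1)`, `v ∈ (0,1/2)`. -/
theorem stmt6 (C : ℝ → ℝ → ℝ) (hC : IsCopula C)
    (D : ℝ → ℝ → ℝ)
    (hcont : ∀ u ∈ Icc (0:ℝ) 1, ContinuousOn (C u) (Icc (0:ℝ) 1))
    (hderiv : ∀ u ∈ Ioo (0:ℝ) 1, ∀ v ∈ Ioo (0:ℝ) 1, HasDerivAt (C u) (D u v) v) :
    (∀ u ∈ Icc (0:ℝ) 1, ∀ v ∈ Icc (0:ℝ) 1, C u v + C u (1 - v) = u) ↔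
    (∀ u ∈ Ioo (0:ℝ) 1, ∀ v ∈ Ioo (0:ℝ) (1/2), D u v = D u (1 - v)) := by
  constructor
  · -- (i) → (ii)
    intro h u hu v hv
    have hv1 : v ∈ Ioo (0:ℝ) 1 := ⟨hv.1, by linarith [hv.2]⟩
    have hv2 : (1 - v) ∈ Ioo (0:ℝ) 1 := ⟨by linarith [hv.2], by linarith [hv.1]⟩
    have hg : HasDerivAt (fun w => C u w + C u (1 - w)) (D u v + D u (1 - v) * (-1)) v := by
      have h1 := hderiv u hu v hv1
      have h2 : HasDerivAt (fun w : ℝ => C u (1 - w)) (D u (1 - v) * (-1)) v := by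
        have hlin : HasDerivAt (fun w : ℝ => 1 - w) (-1) v := by
          exact (hasDerivAt_id' v).const_sub (1:ℝ)
        exact (hderiv u hu (1 - v) hv2).comp v hlin
      exact h1.add h2
    have hgc : HasDerivAt (fun w => C u w + C u (1 - w)) 0 v := by
      have heq : (fun w => C u w + C u (1 - w)) =ᶠ[nhds v] (fun _ => u) := by
        filter_upwards [Ioo_mem_nhds hv1.1 hv1.2] with w hw
        exact h u (Icc_subset_Icc (le_refl 0) (le_refl 1) (Ioo_subset_Icc_self hu))
          w (Ioo_subset_Icc_self hw)
      exact (hasDerivAt_const v u).congr_of_eventuallyEq heq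
    have := hg.unique hgc
    linarith
  · -- (ii) → (i)
    intro h u hu v hv
    rcases eq_or_lt_of_le hu.1 with h0 | h0
    · rw [← h0]
      have hv' : (1 - v) ∈ Icc (0:ℝ) 1 := ⟨by linarith [hv.2], by linarith [hv.1]⟩
      rw [hC.grounded_fst v hv, hC.grounded_fst _ hv']; ring
    rcases eq_or_lt_of_le hu.2 with h1 | h1
    · rw [h1]
      have hv' : (1 - v) ∈ Icc (0:ℝ) 1 := ⟨by linarith [hv.2], by linarith [hv.1]⟩
      rw [hC.margin_snd v hv, hC.margin_snd _ hv']; ring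
    have huo : u ∈ Ioo (0:ℝ) 1 := ⟨h0, h1⟩
    set g : ℝ → ℝ := fun w => C u w + C u (1 - w) with hg_def
    -- derivative of g is zero on (0,1)
    have hgderiv : ∀ w ∈ Ioo (0:ℝ) 1, HasDerivAt g 0 w := by
      intro w hw
      have hw2 : (1 - w) ∈ Ioo (0:ℝ) 1 := ⟨by linarith [hw.2], by linarith [hw.1]⟩
      have h1' := hderiv u huo w hw
      have h2 : HasDerivAt (fun x : ℝ => C u (1 - x)) (D u (1 - w) * (-1)) w := by
        have hlin : HasDerivAt (fun x : ℝ => 1 - x) (-1) w := by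
          exact (hasDerivAt_id' w).const_sub (1:ℝ)
        exact (hderiv u huo (1 - w) hw2).comp w hlin
      have hsum : HasDerivAt g (D u w + D u (1 - w) * (-1)) w := h1'.add h2
      have hzero : D u w = D u (1 - w) := by
        rcases lt_trichotomy w (1/2) with hlt | heq | hgt
        · exact h u huo w ⟨hw.1, hlt⟩
        · rw [heq]; norm_num
        · have := h u huo (1 - w) ⟨by linarith [hw.2], by linarith⟩
          simpa using this.symm
      have : D u w + D u (1 - w) * (-1) = 0 := by rw [hzero]; ring
      rwa [this] at hsum
    -- g continuous on [0,1]
    have hgcont : ContinuousOn g (Icc (0:ℝ) 1) := by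
      have hc := hcont u (Ioo_subset_Icc_self huo)
      apply ContinuousOn.add hc
      have : ContinuousOn (fun w : ℝ => 1 - w) (Icc (0:ℝ) 1) :=
        (continuous_const.sub continuous_id).continuousOn
      apply hc.comp this
      intro x hx
      simp only [mem_Icc] at hx ⊢
      constructor <;> [linarith [hx.2]; linarith [hx.1]]
    have hg1 : g 1 = u := by
      simp only [hg_def]
      rw [show (1:ℝ) - 1 = 0 by ring, hC.margin_fst u hu, hC.grounded_snd u hu]; ring
    -- g is constant on [v', 1] for any v' > 0
    rcases eq_or_lt_of_le hv.1 with hv0 | hv0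
    · have : g 0 = u := by
        simp only [hg_def]
        rw [show (1:ℝ) - 0 = 1 by ring, hC.margin_fst u hu, hC.grounded_snd u hu]; ring
      rw [← hv0]; exact this
    · have hkey : ∀ x ∈ Icc v 1, g x = g v := by
        apply constant_of_has_deriv_right_zero (hgcont.mono (Icc_subset_Icc hv.1 le_rfl))
        intro x hx
        have hxo : x ∈ Ioo (0:ℝ) 1 := ⟨lt_of_lt_of_le hv0 hx.1, hx.2⟩
        exact ((hgderiv x hxo).hasDerivWithinAt)
      have := hkey 1 ⟨hv.2, le_rfl⟩
      rw [hg1] at this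
      exact this.symm
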